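/- arXiv:1703.00979 — 5 statements merged into one kernel-verified Lean document; each statement's English description precedes it below -/
import Mathlib

section
/- Let G be a finite group in which every nilpotent subgroup generated by commutators has exponent dividing e. Then the exponent of the derived subgroup G' divides e. -/
open scoped commutatorElement

open Subgroup MulAction Function

theorem transfer_eq_pow_of_mem {G : Type*} [Group G] {H : Subgroup G} {A : Type*} [CommGroup A]
    (ϕ : ↥H →* A) [H.FiniteIndex] (g : G) (hg : g ∈ H)
    (key : ∀ (k : ℕ) (g₀ : G) (hk : g₀⁻¹ * g ^ k * g₀ ∈ H),
      ϕ ⟨g₀⁻¹ * g ^ k * g₀, hk⟩ = ϕ ⟨g, hg⟩ ^ k) :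
    MonoidHom.transfer ϕ g = ϕ ⟨g, hg⟩ ^ H.index := by
  classical
  letI := H.fintypeQuotientOfFiniteIndex
  rw [MonoidHom.transfer_eq_prod_quotient_orbitRel_zpowers_quot]
  simp only [key]
  rw [Finset.prod_pow_eq_pow_sum]
  congr 1
  rw [index_eq_card, Nat.card_eq_fintype_card,
    Fintype.card_congr (selfEquivSigmaOrbits (zpowers g) (G ⧸ H)), Fintype.card_sigma]
  exact Finset.sum_congr rfl fun q _ => minimalPeriod_eq_card g q.out

theorem focal_pow_eq_one {G : Type*} [Group G] [Finite G] (e : ℕ)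
    (h : ∀ H : Subgroup G, Group.IsNilpotent H →
      (∃ S : Set G, (∀ x ∈ S, ∃ a b : G, x = ⁅a, b⁆) ∧ Subgroup.closure S = H) →
      ∀ x ∈ H, x ^ e = 1)
    {p : ℕ} [hp : Fact p.Prime] (P : Sylow p G) (x : G)
    (hx : x ∈ commutator G) (hxP : x ∈ (P : Subgroup G)) : x ^ e = 1 := by
  classical
  set Pg : Subgroup G := (P : Subgroup G)
  -- the set of commutators of G lying in P, as a set of ↥P
  set S : Set ↥Pg := {g : ↥Pg | ∃ a b : G, (g : G) = ⁅a, b⁆} with hS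
  set F : Subgroup ↥Pg := Subgroup.closure S with hF
  have hSconj : ∀ (g : ↥Pg), ∀ s ∈ S, g * s * g⁻¹ ∈ S := by
    rintro g s ⟨a, b, hab⟩
    refine ⟨(g : G) * a * (g : G)⁻¹, (g : G) * b * (g : G)⁻¹, ?_⟩
    push_cast [hab]
    group
  haveI hFn : F.Normal := by
    constructor
    intro n hn g
    refine Subgroup.closure_induction (fun s hs => Subgroup.subset_closure (hSconj g s hs))
      (by simpa using Subgroup.one_mem F) (fun a b _ _ ha hb => ?_) (fun a _ ha => ?_) hn
    · have : g * (a * b) * g⁻¹ = (g * a * g⁻¹) * (g * b * g⁻¹) := by group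
      rw [this]; exact Subgroup.mul_mem F ha hb
    · have : g * a⁻¹ * g⁻¹ = (g * a * g⁻¹)⁻¹ := by group
      rw [this]; exact Subgroup.inv_mem F ha
  letI : CommGroup (↥Pg ⧸ F) :=
    { (inferInstance : Group (↥Pg ⧸ F)) with
      mul_comm := fun a b => by
        induction a using QuotientGroup.induction_on with
        | H a =>
        induction b using QuotientGroup.induction_on with
        | H b =>
        rw [← QuotientGroup.mk_mul, ← QuotientGroup.mk_mul, QuotientGroup.eq]
        exact Subgroup.subset_closure ⟨(b : G)⁻¹, (a : G)⁻¹, by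
          push_cast [commutatorElement_def]; group⟩ }
  set ϕ : ↥Pg →* (↥Pg ⧸ F) := QuotientGroup.mk' F with hϕ
  have key : ∀ (k : ℕ) (g₀ : G) (hk : g₀⁻¹ * x ^ k * g₀ ∈ Pg),
      ϕ ⟨g₀⁻¹ * x ^ k * g₀, hk⟩ = ϕ ⟨x, hxP⟩ ^ k := by
    intro k g₀ hk
    have hxk : x ^ k ∈ Pg := pow_mem hxP k
    have h2 : (⟨x, hxP⟩ : ↥Pg) ^ k = ⟨x ^ k, hxk⟩ := rfl
    rw [← map_pow, h2, hϕ, QuotientGroup.mk'_apply, QuotientGroup.mk'_apply,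
      QuotientGroup.eq]
    exact Subgroup.subset_closure ⟨g₀⁻¹, (x ^ k)⁻¹, by
      push_cast [commutatorElement_def]; group⟩
  have htr := transfer_eq_pow_of_mem ϕ x hxP key
  have h1 : MonoidHom.transfer ϕ x = 1 :=
    Abelianization.commutator_subset_ker (MonoidHom.transfer ϕ) hx
  rw [h1] at htr
  have hdvd : orderOf (ϕ ⟨x, hxP⟩) ∣ Pg.index := orderOf_dvd_of_pow_eq_one htr.symm
  obtain ⟨k, hk⟩ := (IsPGroup.iff_orderOf.mp P.isPGroup') ⟨x, hxP⟩
  have hdvd2 : orderOf (ϕ ⟨x, hxP⟩) ∣ p ^ k := hk ▸ orderOf_map_dvd ϕ _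
  obtain ⟨j, hj, hj'⟩ := (Nat.dvd_prime_pow hp.out).mp hdvd2
  have hj0 : j = 0 := by
    by_contra hj0
    exact P.not_dvd_index (dvd_trans (dvd_pow_self p hj0) (hj' ▸ hdvd))
  have hϕ1 : ϕ ⟨x, hxP⟩ = 1 := orderOf_eq_one_iff.mp (by rw [hj', hj0, pow_zero])
  have hmem : (⟨x, hxP⟩ : ↥Pg) ∈ F := (QuotientGroup.eq_one_iff _).mp hϕ1
  -- transfer the result to a subgroup of G
  set H : Subgroup G := F.map Pg.subtype with hH
  have hHle : H ≤ Pg := Subgroup.map_subtype_le F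
  haveI : Finite ↥H := Subgroup.instFiniteSubtypeMem H
  have hHp : IsPGroup p ↥H := IsPGroup.to_le P.isPGroup' hHle
  refine h H hHp.isNilpotent ⟨Pg.subtype '' S, ?_, ?_⟩ x ⟨⟨x, hxP⟩, hmem, rfl⟩
  · rintro g ⟨⟨g', hg'⟩, ⟨a, b, hab⟩, rfl⟩
    exact ⟨a, b, hab⟩
  · rw [hH, hF, MonoidHom.map_closure]

/-- If in a finite group `G` every nilpotent subgroup generated by commutators has
exponent dividing `e`, then the exponent of the derived subgroup `G'` divides `e`. -/
theorem exponent_of_commutator_subgroup_divides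
    {G : Type*} [Group G] [Finite G] (e : ℕ)
    (h : ∀ H : Subgroup G, Group.IsNilpotent H →
      (∃ S : Set G, (∀ x ∈ S, ∃ a b : G, x = ⁅a, b⁆) ∧ Subgroup.closure S = H) →
      ∀ x ∈ H, x ^ e = 1) :
    ∀ x ∈ commutator G, x ^ e = 1 := by
  intro x hx
  rw [← orderOf_dvd_iff_pow_eq_one]
  rw [Nat.dvd_iff_prime_pow_dvd_dvd]
  intro p k pp hpk
  haveI : Fact p.Prime := ⟨pp⟩
  rcases Nat.eq_zero_or_pos k with rfl | hk
  · simp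
  set n := orderOf x with hn
  have hn0 : n ≠ 0 := (orderOf_pos x).ne'
  set m := n.factorization p with hm
  set y := x ^ (n / p ^ m) with hy
  have hdvd : p ^ m ∣ n := Nat.ordProj_dvd n p
  have hyord : orderOf y = p ^ m := by
    rw [hy, orderOf_pow, ← hn, Nat.gcd_eq_right (Nat.div_dvd_of_dvd hdvd),
      Nat.div_div_self hdvd hn0]
  have hyc : y ∈ commutator G := pow_mem hx _
  have hyP : IsPGroup p (Subgroup.zpowers y) :=
    IsPGroup.of_card (by rw [Nat.card_zpowers, hyord])
  obtain ⟨P, hP⟩ := hyP.exists_le_sylow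
  have hye : y ^ e = 1 := focal_pow_eq_one e h P y hyc (hP (Subgroup.mem_zpowers y))
  have : p ^ m ∣ e := hyord ▸ orderOf_dvd_of_pow_eq_one hye
  exact dvd_trans (pow_dvd_pow p
    ((pp.pow_dvd_iff_le_factorization hn0).mp hpk)) this
end

section
/- Let G be a nilpotent group and suppose that G is generated by a commutator-closed subset X which is contained in a union of finitely many subgroups G_1, G_2, …, G_s of G. Then G can be written as the setwise product G = G_1 G_2 ⋯ G_s. -/
open Subgroup

open scoped commutatorElement

universe u

private lemma ofFn_prod_mul {G : Type u} [Group G] :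
    ∀ {s : ℕ} (f g : Fin s → G), (∀ i (x : G), Commute (g i) x) →
      (List.ofFn (fun i => f i * g i)).prod = (List.ofFn f).prod * (List.ofFn g).prod := by
  intro s
  induction s with
  | zero => intro f g _; simp
  | succ n ih =>
    intro f g hg
    simp only [List.ofFn_succ, List.prod_cons]
    rw [ih (fun i => f i.succ) (fun i => g i.succ) (fun i => hg i.succ)]
    have h := (hg 0 (List.ofFn (fun i : Fin n => f i.succ)).prod).eq
    rw [mul_assoc (f 0), mul_assoc (f 0), ← mul_assoc (g 0), h, mul_assoc]

private lemma ofFn_prod_single {G : Type u} [Group G] :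
    ∀ {s : ℕ} (f : Fin s → G) (i : Fin s) (z : G), f i = z → (∀ j, j ≠ i → f j = 1) →
      (List.ofFn f).prod = z := by
  intro s
  induction s with
  | zero => exact fun f i => i.elim0
  | succ n ih =>
    intro f i z hfi h1
    induction i using Fin.cases with
    | zero =>
      rw [List.ofFn_succ, List.prod_cons, hfi]
      have ht : (List.ofFn fun j : Fin n => f j.succ).prod = (1 : G) := by
        have : (fun j : Fin n => f j.succ) = fun _ => (1 : G) := by
          funext j; exact h1 j.succ (Fin.succ_ne_zero j)
        rw [this, List.ofFn_const, List.prod_replicate, one_pow]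
      rw [ht, mul_one]
    | succ k =>
      rw [List.ofFn_succ, List.prod_cons, h1 0 (Ne.symm (Fin.succ_ne_zero k)), one_mul]
      exact ih (fun j => f j.succ) k z hfi (fun j hj => h1 j.succ (by
        intro hc; exact hj (Fin.succ_injective n hc)))

private lemma central_decomp {G : Type u} [Group G] {s : ℕ} (Gs : Fin s → Subgroup G)
    (S : Set G) (hcov : S ⊆ ⋃ i, (Gs i : Set G))
    (hcen : ∀ t ∈ S, ∀ x : G, Commute t x) :
    ∀ z ∈ closure S, ∃ f : Fin s → G,
      (∀ i, f i ∈ Gs i ∧ ∀ x : G, Commute (f i) x) ∧ z = (List.ofFn f).prod := by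
  intro z hz
  induction hz using closure_induction with
  | mem t ht =>
    obtain ⟨_, ⟨i, rfl⟩, hi⟩ := hcov ht
    refine ⟨fun j => if j = i then t else 1, fun j => ?_, ?_⟩
    · constructor
      · by_cases hji : j = i
        · simp only [hji, if_pos rfl]; exact hi
        · simp only [if_neg hji]; exact one_mem _
      · intro x
        by_cases hji : j = i
        · simp only [hji, if_pos rfl]; exact hcen t ht x
        · simp only [if_neg hji]; exact Commute.one_left x
    · exact (ofFn_prod_single _ i t (if_pos rfl) (fun j hj => if_neg hj)).symm
  | one =>
    refine ⟨fun _ => 1, fun i => ⟨one_mem _, fun x => Commute.one_left x⟩, ?_⟩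
    rw [List.ofFn_const, List.prod_replicate, one_pow]
  | mul x y hx hy ihx ihy =>
    obtain ⟨f, hf, rfl⟩ := ihx
    obtain ⟨f', hf', rfl⟩ := ihy
    refine ⟨fun i => f i * f' i, fun i => ⟨mul_mem (hf i).1 (hf' i).1,
      fun x => Commute.mul_left ((hf i).2 x) ((hf' i).2 x)⟩, ?_⟩
    rw [ofFn_prod_mul f f' (fun i => (hf' i).2)]
  | inv x hx ihx =>
    obtain ⟨f, hf, rfl⟩ := ihx
    refine ⟨fun i => (f i)⁻¹, fun i => ⟨inv_mem (hf i).1,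
      fun x => ((hf i).2 x).inv_left⟩, ?_⟩
    have h1 : (List.ofFn (fun i => f i * (f i)⁻¹)).prod = (1 : G) := by
      simp only [mul_inv_cancel]
      rw [List.ofFn_const, List.prod_replicate, one_pow]
    rw [ofFn_prod_mul f (fun i => (f i)⁻¹) (fun i x => ((hf i).2 x).inv_left)] at h1
    exact (eq_inv_of_mul_eq_one_right h1).symm

private lemma lcs_map_surjective {G H : Type u} [Group G] [Group H] (φ : G →* H)
    (hφ : Function.Surjective φ) (n : ℕ) :
    (Subgroup.lowerCentralSeries (⊤ : Subgroup G) n).map φ = Subgroup.lowerCentralSeries (⊤ : Subgroup H) n := by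
  induction n with
  | zero =>
    rw [Subgroup.lowerCentralSeries_zero, Subgroup.lowerCentralSeries_zero]
    exact Subgroup.map_top_of_surjective φ hφ
  | succ n ih =>
    show Subgroup.map φ ⁅Subgroup.lowerCentralSeries (⊤ : Subgroup G) n, (⊤ : Subgroup G)⁆ =
      ⁅Subgroup.lowerCentralSeries (⊤ : Subgroup H) n, (⊤ : Subgroup H)⁆
    rw [Subgroup.map_commutator, ih, Subgroup.map_top_of_surjective φ hφ]

private lemma lemB : ∀ (m : ℕ) (G : Type u) [Group G] (X : Set G),
    (∀ x ∈ X, ∀ y ∈ X, ⁅x, y⁆ ∈ X) → Subgroup.closure X = ⊤ →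
    Subgroup.lowerCentralSeries (⊤ : Subgroup G) (m + 1) = ⊥ →
    Subgroup.lowerCentralSeries (⊤ : Subgroup G) m ≤ Subgroup.closure (X ∩ (Subgroup.lowerCentralSeries (⊤ : Subgroup G) m : Set G)) := by
  intro m
  induction m with
  | zero =>
    intro G _ X hX hgen _
    rw [Subgroup.lowerCentralSeries_zero, coe_top, Set.inter_univ, hgen]
  | succ m ih =>
    intro G _ X hX hgen hnil
    -- N := Subgroup.lowerCentralSeries (⊤ : Subgroup G) (m+1) is central
    have hcent : ∀ z ∈ Subgroup.lowerCentralSeries (⊤ : Subgroup G) (m + 1), ∀ x : G, Commute z x := by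
      intro z hz x
      have h : ⁅z, x⁆ ∈ Subgroup.lowerCentralSeries (⊤ : Subgroup G) (m + 2) :=
        commutator_mem_commutator hz (mem_top x)
      rw [hnil, mem_bot] at h
      exact commutatorElement_eq_one_iff_commute.mp h
    set π := QuotientGroup.mk' (Subgroup.lowerCentralSeries (⊤ : Subgroup G) (m + 1)) with hπdef
    have hπ : Function.Surjective π := QuotientGroup.mk'_surjective _
    have hXQ : ∀ a ∈ π '' X, ∀ b ∈ π '' X, ⁅a, b⁆ ∈ π '' X := by
      rintro _ ⟨x, hx, rfl⟩ _ ⟨y, hy, rfl⟩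
      exact ⟨⁅x, y⁆, hX x hx y hy, map_commutatorElement π x y⟩
    have hgenQ : Subgroup.closure (π '' X) = ⊤ := by
      rw [← MonoidHom.map_closure, hgen, Subgroup.map_top_of_surjective π hπ]
    have hnilQ : Subgroup.lowerCentralSeries (⊤ : Subgroup (G ⧸ Subgroup.lowerCentralSeries (⊤ : Subgroup G) (m + 1))) (m + 1) = ⊥ := by
      rw [← lcs_map_surjective π hπ (m + 1)]
      exact (Subgroup.map_eq_bot_iff _).mpr (by rw [QuotientGroup.ker_mk'])
    have IH := ih (G ⧸ Subgroup.lowerCentralSeries (⊤ : Subgroup G) (m + 1)) (π '' X) hXQ hgenQ hnilQ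
    -- decomposition of elements of γ_m
    have hdec : ∀ a ∈ Subgroup.lowerCentralSeries (⊤ : Subgroup G) m,
        ∃ u ∈ Subgroup.closure (X ∩ (Subgroup.lowerCentralSeries (⊤ : Subgroup G) m : Set G)),
          ∃ d ∈ Subgroup.lowerCentralSeries (⊤ : Subgroup G) (m + 1), a = u * d := by
      intro a ha
      have h1 : π a ∈ Subgroup.lowerCentralSeries (⊤ : Subgroup (G ⧸ Subgroup.lowerCentralSeries (⊤ : Subgroup G) (m + 1))) m := by
        rw [← lcs_map_surjective π hπ m]
        exact mem_map_of_mem π ha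
      have h2 := IH h1
      have hsub : (π '' X) ∩ ((Subgroup.lowerCentralSeries (⊤ : Subgroup (G ⧸ Subgroup.lowerCentralSeries (⊤ : Subgroup G) (m + 1))) m : Subgroup _) : Set _)
          ⊆ π '' (X ∩ (Subgroup.lowerCentralSeries (⊤ : Subgroup G) m : Set G)) := by
        rintro _ ⟨⟨x, hx, rfl⟩, hmem⟩
        have hx2 : π x ∈ (Subgroup.lowerCentralSeries (⊤ : Subgroup G) m).map π := by
          rw [lcs_map_surjective π hπ m]; exact hmem
        obtain ⟨b, hb, hbx⟩ := hx2
        have hk : b⁻¹ * x ∈ Subgroup.lowerCentralSeries (⊤ : Subgroup G) (m + 1) := by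
          refine (QuotientGroup.eq_one_iff _).mp ?_
          show π (b⁻¹ * x) = 1
          rw [map_mul, map_inv, hbx, inv_mul_cancel]
        have hxm : x ∈ Subgroup.lowerCentralSeries (⊤ : Subgroup G) m := by
          have := mul_mem hb (Subgroup.lowerCentralSeries_antitone (S := ⊤) (Nat.le_succ m) hk)
          simpa using this
        exact ⟨x, ⟨hx, hxm⟩, rfl⟩
      have h3 : π a ∈ Subgroup.map π (Subgroup.closure (X ∩ (Subgroup.lowerCentralSeries (⊤ : Subgroup G) m : Set G))) := by
        rw [MonoidHom.map_closure]
        exact Subgroup.closure_mono hsub h2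
      obtain ⟨u, hu, hux⟩ := h3
      refine ⟨u, hu, u⁻¹ * a, ?_, by group⟩
      refine (QuotientGroup.eq_one_iff _).mp ?_
      show π (u⁻¹ * a) = 1
      rw [map_mul, map_inv, hux, inv_mul_cancel]
    -- step 1
    have step1 : ∀ u ∈ X, u ∈ Subgroup.lowerCentralSeries (⊤ : Subgroup G) m → ∀ g : G,
        ⁅u, g⁆ ∈ Subgroup.closure (X ∩ (Subgroup.lowerCentralSeries (⊤ : Subgroup G) (m + 1) : Set G)) := by
      intro u hu hum g
      have hg : g ∈ Subgroup.closure X := hgen ▸ mem_top g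
      induction hg using closure_induction with
      | mem x hx =>
        exact subset_closure ⟨hX u hu x hx, commutator_mem_commutator hum (mem_top x)⟩
      | one => simpa using one_mem (Subgroup.closure (X ∩ (Subgroup.lowerCentralSeries (⊤ : Subgroup G) (m + 1) : Set G)))
      | mul g h _ _ ihg ihh =>
        have hw : ⁅u, h⁆ ∈ Subgroup.lowerCentralSeries (⊤ : Subgroup G) (m + 1) :=
          commutator_mem_commutator hum (mem_top h)
        have e1 : ⁅u, g * h⁆ = ⁅u, g⁆ * (g * ⁅u, h⁆ * g⁻¹) := by
          simp only [commutatorElement_def]; group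
        have e2 : g * ⁅u, h⁆ * g⁻¹ = ⁅u, h⁆ := by
          rw [← (hcent _ hw g).eq, mul_inv_cancel_right]
        rw [e1, e2]
        exact mul_mem ihg ihh
      | inv g _ ihg =>
        have hw : ⁅u, g⁆ ∈ Subgroup.lowerCentralSeries (⊤ : Subgroup G) (m + 1) :=
          commutator_mem_commutator hum (mem_top g)
        have e1 : ⁅u, g⁻¹⁆ = g⁻¹ * ⁅u, g⁆⁻¹ * g := by
          simp only [commutatorElement_def]; group
        have e2 : g⁻¹ * ⁅u, g⁆⁻¹ * g = ⁅u, g⁆⁻¹ := by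
          rw [← ((hcent _ hw g).inv_left.inv_right).eq, inv_mul_cancel_right]
        rw [e1, e2]
        exact inv_mem ihg
    -- step 2
    have step2 : ∀ u ∈ Subgroup.closure (X ∩ (Subgroup.lowerCentralSeries (⊤ : Subgroup G) m : Set G)),
        u ∈ Subgroup.lowerCentralSeries (⊤ : Subgroup G) m ∧ ∀ g : G,
          ⁅u, g⁆ ∈ Subgroup.closure (X ∩ (Subgroup.lowerCentralSeries (⊤ : Subgroup G) (m + 1) : Set G)) := by
      intro u hu
      induction hu using closure_induction with
      | mem x hx => exact ⟨hx.2, step1 x hx.1 hx.2⟩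
      | one =>
        exact ⟨one_mem _, fun g => by
          simpa using one_mem (Subgroup.closure (X ∩ (Subgroup.lowerCentralSeries (⊤ : Subgroup G) (m + 1) : Set G)))⟩
      | mul u v _ _ ihu ihv =>
        refine ⟨mul_mem ihu.1 ihv.1, fun g => ?_⟩
        have hw : ⁅v, g⁆ ∈ Subgroup.lowerCentralSeries (⊤ : Subgroup G) (m + 1) :=
          commutator_mem_commutator ihv.1 (mem_top g)
        have e1 : ⁅u * v, g⁆ = u * ⁅v, g⁆ * u⁻¹ * ⁅u, g⁆ := by
          simp only [commutatorElement_def]; group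
        have e2 : u * ⁅v, g⁆ * u⁻¹ = ⁅v, g⁆ := by
          rw [← (hcent _ hw u).eq, mul_inv_cancel_right]
        rw [e1, e2]
        exact mul_mem (ihv.2 g) (ihu.2 g)
      | inv u _ ihu =>
        refine ⟨inv_mem ihu.1, fun g => ?_⟩
        have hw : ⁅u, g⁆ ∈ Subgroup.lowerCentralSeries (⊤ : Subgroup G) (m + 1) :=
          commutator_mem_commutator ihu.1 (mem_top g)
        have e1 : ⁅u⁻¹, g⁆ = u⁻¹ * ⁅u, g⁆⁻¹ * u := by
          simp only [commutatorElement_def]; group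
        have e2 : u⁻¹ * ⁅u, g⁆⁻¹ * u = ⁅u, g⁆⁻¹ := by
          rw [← ((hcent _ hw u).inv_left.inv_right).eq, inv_mul_cancel_right]
        rw [e1, e2]
        exact inv_mem (ihu.2 g)
    -- conclude
    show Subgroup.lowerCentralSeries (⊤ : Subgroup G) (m + 1) ≤ _
    have hle : (⁅Subgroup.lowerCentralSeries (⊤ : Subgroup G) m, (⊤ : Subgroup G)⁆ : Subgroup G) ≤
        Subgroup.closure (X ∩ (Subgroup.lowerCentralSeries (⊤ : Subgroup G) (m + 1) : Set G)) := by
      rw [Subgroup.commutator_le]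
      intro b hb g _
      obtain ⟨u, hu, d, hd, rfl⟩ := hdec b hb
      have e1 : ⁅u * d, g⁆ = u * ⁅d, g⁆ * u⁻¹ * ⁅u, g⁆ := by
        simp only [commutatorElement_def]; group
      have hdg : ⁅d, g⁆ = 1 := commutatorElement_eq_one_iff_commute.mpr (hcent d hd g)
      rw [e1, hdg, mul_one, mul_inv_cancel, one_mul]
      exact (step2 u hu).2 g
    exact hle

private lemma mainL : ∀ (n : ℕ) (G : Type u) [Group G] (X : Set G),
    (∀ x ∈ X, ∀ y ∈ X, ⁅x, y⁆ ∈ X) → Subgroup.closure X = ⊤ →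
    ∀ (s : ℕ) (Gs : Fin s → Subgroup G), X ⊆ ⋃ i, (Gs i : Set G) →
    Subgroup.lowerCentralSeries (⊤ : Subgroup G) n = ⊥ →
    ∀ g : G, ∃ f : Fin s → G, (∀ i, f i ∈ Gs i) ∧ g = (List.ofFn f).prod := by
  intro n
  induction n with
  | zero =>
    intro G _ X hX hgen s Gs hcov hnil g
    have hg : g ∈ (⊥ : Subgroup G) := by
      rw [← hnil]; exact mem_top g
    refine ⟨fun _ => 1, fun i => one_mem _, ?_⟩
    rw [mem_bot.mp hg, List.ofFn_const, List.prod_replicate, one_pow]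
  | succ n ih =>
    intro G _ X hX hgen s Gs hcov hnil g
    have hcent : ∀ z ∈ Subgroup.lowerCentralSeries (⊤ : Subgroup G) n, ∀ x : G, Commute z x := by
      intro z hz x
      have h : ⁅z, x⁆ ∈ Subgroup.lowerCentralSeries (⊤ : Subgroup G) (n + 1) :=
        commutator_mem_commutator hz (mem_top x)
      rw [hnil, mem_bot] at h
      exact commutatorElement_eq_one_iff_commute.mp h
    set π := QuotientGroup.mk' (Subgroup.lowerCentralSeries (⊤ : Subgroup G) n) with hπdef
    have hπ : Function.Surjective π := QuotientGroup.mk'_surjective _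
    have hXQ : ∀ a ∈ π '' X, ∀ b ∈ π '' X, ⁅a, b⁆ ∈ π '' X := by
      rintro _ ⟨x, hx, rfl⟩ _ ⟨y, hy, rfl⟩
      exact ⟨⁅x, y⁆, hX x hx y hy, map_commutatorElement π x y⟩
    have hgenQ : Subgroup.closure (π '' X) = ⊤ := by
      rw [← MonoidHom.map_closure, hgen, Subgroup.map_top_of_surjective π hπ]
    have hcovQ : (π '' X) ⊆ ⋃ i, (((Gs i).map π : Subgroup _) : Set _) := by
      rintro _ ⟨x, hx, rfl⟩
      obtain ⟨_, ⟨i, rfl⟩, hi⟩ := hcov hx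
      exact Set.mem_iUnion.mpr ⟨i, mem_map_of_mem π hi⟩
    have hnilQ : Subgroup.lowerCentralSeries (⊤ : Subgroup (G ⧸ Subgroup.lowerCentralSeries (⊤ : Subgroup G) n)) n = ⊥ := by
      rw [← lcs_map_surjective π hπ n]
      exact (Subgroup.map_eq_bot_iff _).mpr (by rw [QuotientGroup.ker_mk'])
    obtain ⟨fb, hfb, hprod⟩ := ih (G ⧸ Subgroup.lowerCentralSeries (⊤ : Subgroup G) n) (π '' X) hXQ hgenQ s
      (fun i => (Gs i).map π) hcovQ hnilQ (π g)
    choose g' hg' hπg' using fun i => Subgroup.mem_map.mp (hfb i)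
    have hπprod : π (List.ofFn g').prod = (List.ofFn fb).prod := by
      rw [← List.prod_hom _ (π : G →* G ⧸ Subgroup.lowerCentralSeries (⊤ : Subgroup G) n), List.map_ofFn]
      rw [show ⇑π ∘ g' = fb from funext hπg']
    have hd : (List.ofFn g').prod⁻¹ * g ∈ Subgroup.lowerCentralSeries (⊤ : Subgroup G) n := by
      refine (QuotientGroup.eq_one_iff _).mp ?_
      show π ((List.ofFn g').prod⁻¹ * g) = 1
      rw [map_mul, map_inv, hπprod, ← hprod, inv_mul_cancel]
    have hd2 : (List.ofFn g').prod⁻¹ * g ∈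
        Subgroup.closure (X ∩ (Subgroup.lowerCentralSeries (⊤ : Subgroup G) n : Set G)) :=
      lemB n G X hX hgen hnil hd
    obtain ⟨z, hz, hzprod⟩ := central_decomp Gs (X ∩ (Subgroup.lowerCentralSeries (⊤ : Subgroup G) n : Set G))
      (fun t ht => hcov ht.1) (fun t ht => hcent t ht.2) _ hd2
    refine ⟨fun i => g' i * z i, fun i => mul_mem (hg' i) (hz i).1, ?_⟩
    rw [ofFn_prod_mul g' z (fun i => (hz i).2), ← hzprod, mul_inv_cancel_left]

/-- If a nilpotent group `G` is generated by a commutator-closed subset `X` which is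
contained in the union of finitely many subgroups `G_1, …, G_s`, then `G` equals the
setwise product `G_1 G_2 ⋯ G_s`. -/
theorem nilpotent_generated_by_covered_commClosed_set_eq_product
    {G : Type*} [Group G] (hnil : Group.IsNilpotent G)
    (X : Set G) (hX : ∀ x ∈ X, ∀ y ∈ X, ⁅x, y⁆ ∈ X)
    (hgen : Subgroup.closure X = ⊤) (s : ℕ) (Gs : Fin s → Subgroup G)
    (hcov : X ⊆ ⋃ i, (Gs i : Set G)) :
    ∀ g : G, ∃ f : Fin s → G, (∀ i, f i ∈ Gs i) ∧ g = (List.ofFn f).prod := by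
  obtain ⟨n, hn⟩ := Subgroup.nilpotent_iff_lowerCentralSeries.mp hnil
  exact mainL n G X hX hgen s Gs hcov hn
end

section
/- Let w be a multilinear commutator word and G a profinite group having countably many soluble subgroups whose union contains the set of all w-values in G. Then the verbal subgroup w(G) is soluble-by-finite. -/
/-- Formal words built by nesting commutators of indeterminates. -/
inductive GpWord : Type
  | var : ℕ → GpWord
  | comm : GpWord → GpWord → GpWord

namespace GpWord

open scoped commutatorElement

/-- The set of indeterminates occurring in a word. -/
def vars : GpWord → Finset ℕ
  | var i => {i}
  | comm u v => u.vars ∪ v.vars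

/-- A multilinear (outer) commutator word: each indeterminate is one, and the
commutator of two multilinear commutator words in disjoint indeterminates is one. -/
inductive IsMlc : GpWord → Prop
  | var (i : ℕ) : IsMlc (var i)
  | comm {u v : GpWord} : IsMlc u → IsMlc v → Disjoint u.vars v.vars → IsMlc (u.comm v)

/-- Evaluation of a word in a group under an assignment of the indeterminates. -/
def eval {G : Type*} [Group G] (f : ℕ → G) : GpWord → G
  | var i => f i
  | comm u v => ⁅eval f u, eval f v⁆

end GpWord

/-- The set of `w`-values in `G`. -/
def wValues (w : GpWord) (G : Type*) [Group G] : Set G :=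
  {g | ∃ f : ℕ → G, GpWord.eval f w = g}

open scoped commutatorElement

namespace GpWord

/-- The height (nesting depth) of a word. -/
def ht : GpWord → ℕ
  | var _ => 0
  | comm u v => max u.ht v.ht + 1

variable {G : Type*} [Group G]

theorem eval_congr {f g : ℕ → G} :
    ∀ w : GpWord, (∀ i ∈ w.vars, f i = g i) → eval f w = eval g w
  | var i, h => h i (by simp [vars])
  | comm u v, h => by
    simp only [eval]
    rw [eval_congr u fun i hi => h i (by simp [vars, hi]),
        eval_congr v fun i hi => h i (by simp [vars, hi])]

theorem eval_map {H : Type*} [Group H] (φ : G →* H) (f : ℕ → G) :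
    ∀ w : GpWord, eval (fun i => φ (f i)) w = φ (eval f w)
  | var _ => rfl
  | comm u v => by
    simp only [eval, eval_map φ f u, eval_map φ f v, map_commutatorElement]

theorem eval_one : ∀ w : GpWord, eval (fun _ => (1 : G)) w = 1
  | var _ => rfl
  | comm u v => by simp only [eval, eval_one u, eval_one v, commutatorElement_one_left]

end GpWord

section AderInfra

variable {G : Type*} [Group G]

/-- Ambient iterated commutator subgroup ("relative derived series"). -/
def aDer (K : Subgroup G) : ℕ → Subgroup G
  | 0 => K
  | n + 1 => ⁅aDer K n, aDer K n⁆

theorem aDer_normal (K : Subgroup G) [hK : K.Normal] : ∀ n, (aDer K n).Normal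
  | 0 => hK
  | n + 1 => by
    haveI := aDer_normal K n
    exact Subgroup.commutator_normal _ _

theorem aDer_succ_le (K : Subgroup G) [K.Normal] (n : ℕ) : aDer K (n + 1) ≤ aDer K n := by
  haveI := aDer_normal K n
  exact Subgroup.commutator_le_left _ _

theorem aDer_le_base (K : Subgroup G) [K.Normal] : ∀ n, aDer K n ≤ K
  | 0 => le_rfl
  | n + 1 => (aDer_succ_le K n).trans (aDer_le_base K n)

theorem aDer_antitone (K : Subgroup G) [K.Normal] {m n : ℕ} (h : m ≤ n) :
    aDer K n ≤ aDer K m := by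
  induction n with
  | zero => simpa [Nat.le_zero.mp h] using le_rfl
  | succ n ih =>
    rcases Nat.lt_or_ge m (n + 1) with h' | h'
    · exact (aDer_succ_le K n).trans (ih (Nat.lt_succ_iff.mp h'))
    · have : m = n + 1 := le_antisymm h h'
      simp [this]

theorem aDer_mono {K L : Subgroup G} (h : K ≤ L) : ∀ n, aDer K n ≤ aDer L n
  | 0 => h
  | n + 1 => Subgroup.commutator_mono (aDer_mono h n) (aDer_mono h n)

theorem aDer_add (K : Subgroup G) (m : ℕ) : ∀ n, aDer K (m + n) = aDer (aDer K m) n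
  | 0 => rfl
  | n + 1 => by
    show aDer K (m + n + 1) = _
    show ⁅aDer K (m + n), aDer K (m + n)⁆ = _
    rw [aDer_add K m n]
    rfl

theorem map_subtype_derivedSeries (K : Subgroup G) :
    ∀ n, (derivedSeries K n).map K.subtype = aDer K n
  | 0 => by
    simp only [derivedSeries_zero]
    rw [← MonoidHom.range_eq_map]
    exact K.range_subtype
  | n + 1 => by
    simp only [derivedSeries_succ, Subgroup.map_commutator, map_subtype_derivedSeries K n]
    rfl

theorem isSolvable_of_aDer_le {K D : Subgroup G} (hD : IsSolvable D) {m : ℕ}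
    (h : aDer K m ≤ D) : IsSolvable K := by
  obtain ⟨d, hd⟩ := hD.solvable
  have hDd : aDer (D : Subgroup G) d = ⊥ := by
    rw [← map_subtype_derivedSeries, hd, Subgroup.map_bot]
  have : aDer K (m + d) = ⊥ := by
    rw [aDer_add]
    exact le_bot_iff.mp ((aDer_mono h d).trans hDd.le)
  refine ⟨⟨m + d, ?_⟩⟩
  have := map_subtype_derivedSeries K (m + d)
  rw [this] at *
  have h2 : (derivedSeries K (m + d)).map K.subtype = ⊥ := by
    rw [map_subtype_derivedSeries, ‹aDer K (m + d) = ⊥›]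
  exact (Subgroup.map_eq_bot_iff_of_injective _ K.subtype_injective).mp h2

end AderInfra

namespace GpWord

section Core

variable {G : Type*} [Group G] (N : Subgroup G) [hN : N.Normal] (f : ℕ → G)

/-- The set of values of `w` at assignments congruent to `f` modulo `N`. -/
def Pat (w : GpWord) : Set G :=
  {x | ∃ f' : ℕ → G, (∀ i, (f i)⁻¹ * f' i ∈ N) ∧ eval f' w = x}

/-- Right-quotients of pairs of pattern values. -/
def Dif (w : GpWord) : Set G :=
  {d | ∃ x ∈ Pat N f w, ∃ y ∈ Pat N f w, d = y * x⁻¹}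

/-- The subgroup generated by quotients of pattern values. -/
def Rw (w : GpWord) : Subgroup G := Subgroup.closure (Dif N f w)

theorem base_mem_pat (w : GpWord) : eval f w ∈ Pat N f w :=
  ⟨f, fun i => by rw [inv_mul_cancel]; exact one_mem N, rfl⟩

theorem pat_mk_eq {w : GpWord} {x : G} (hx : x ∈ Pat N f w) :
    QuotientGroup.mk' N x = QuotientGroup.mk' N (eval f w) := by
  obtain ⟨f', hf', rfl⟩ := hx
  rw [← eval_map (QuotientGroup.mk' N) f', ← eval_map (QuotientGroup.mk' N) f]
  congr 1
  funext i
  exact (QuotientGroup.eq.mpr (hf' i)).symm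

theorem dif_subset_N {w : GpWord} : Dif N f w ⊆ (N : Set G) := by
  rintro d ⟨x, hx, y, hy, rfl⟩
  have h1 := pat_mk_eq N f hx
  have h2 := pat_mk_eq N f hy
  have h3 : QuotientGroup.mk' N (y * x⁻¹) = 1 := by
    rw [map_mul, map_inv, h1, h2, mul_inv_cancel]
  have h4 : y * x⁻¹ ∈ (QuotientGroup.mk' N).ker := h3
  rwa [QuotientGroup.ker_mk'] at h4

theorem rw_le_N {w : GpWord} : Rw N f w ≤ N :=
  (Subgroup.closure_le N).mpr (dif_subset_N N f)

theorem pat_conj {w : GpWord} {t x : G} (ht : t ∈ N) (hx : x ∈ Pat N f w) :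
    t * x * t⁻¹ ∈ Pat N f w := by
  obtain ⟨f', hf', rfl⟩ := hx
  refine ⟨fun i => t * f' i * t⁻¹, fun i => ?_, ?_⟩
  · have h1 : (f i)⁻¹ * t * f i ∈ N := by simpa using hN.conj_mem t ht (f i)⁻¹
    have h2 : (f i)⁻¹ * f' i ∈ N := hf' i
    have h3 : (f i)⁻¹ * (t * f' i * t⁻¹) =
        ((f i)⁻¹ * t * f i) * ((f i)⁻¹ * f' i) * t⁻¹ := by group
    rw [h3]
    exact mul_mem (mul_mem h1 h2) (inv_mem ht)
  · have := eval_map (MulAut.conj t).toMonoidHom f' w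
    simpa [MulAut.conj_apply, mul_assoc] using this

theorem dif_conj {w : GpWord} {t d : G} (ht : t ∈ N) (hd : d ∈ Dif N f w) :
    t * d * t⁻¹ ∈ Dif N f w := by
  obtain ⟨x, hx, y, hy, rfl⟩ := hd
  exact ⟨t * x * t⁻¹, pat_conj N f ht hx, t * y * t⁻¹, pat_conj N f ht hy, by group⟩

theorem pat_comm {u v : GpWord} (hd : Disjoint u.vars v.vars)
    {x y : G} (hx : x ∈ Pat N f u) (hy : y ∈ Pat N f v) :
    ⁅x, y⁆ ∈ Pat N f (u.comm v) := by
  classical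
  obtain ⟨f₁, hf₁, rfl⟩ := hx
  obtain ⟨f₂, hf₂, rfl⟩ := hy
  refine ⟨fun i => if i ∈ u.vars then f₁ i else f₂ i, fun i => ?_, ?_⟩
  · by_cases h : i ∈ u.vars <;> simp [h, hf₁ i, hf₂ i]
  · show ⁅eval _ u, eval _ v⁆ = _
    rw [eval_congr (f := fun i => if i ∈ u.vars then f₁ i else f₂ i) (g := f₁) u
          (fun i hi => by simp [hi]),
        eval_congr (f := fun i => if i ∈ u.vars then f₁ i else f₂ i) (g := f₂) v
          (fun i hi => by
            have h' : i ∉ u.vars := Finset.disjoint_right.mp hd hi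
            simp [h'])]

theorem dif_mem {w : GpWord} {x y : G} (hx : x ∈ Pat N f w) (hy : y ∈ Pat N f w) :
    y * x⁻¹ ∈ Rw N f w :=
  Subgroup.subset_closure ⟨x, hx, y, hy, rfl⟩

end Core

end GpWord

namespace GpWord

section Main

variable {G : Type*} [Group G] (N : Subgroup G) [hN : N.Normal] (f : ℕ → G)

theorem aDer_ht_le_Rw : ∀ {w : GpWord}, IsMlc w → aDer N (ht w) ≤ Rw N f w := by
  intro w hw
  induction hw with
  | var i =>
    intro n hn
    have hn' : n ∈ N := hn
    have hx : f i ∈ Pat N f (GpWord.var i) := base_mem_pat N f _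
    have h1 : (f i)⁻¹ * n * f i ∈ N := by simpa using hN.conj_mem n hn' (f i)⁻¹
    have hy : f i * ((f i)⁻¹ * n * f i) ∈ Pat N f (GpWord.var i) := by
      refine ⟨Function.update f i (f i * ((f i)⁻¹ * n * f i)), fun j => ?_, ?_⟩
      · rcases eq_or_ne j i with rfl | hj
        · rw [Function.update_self]
          simpa [mul_assoc] using h1
        · rw [Function.update_of_ne hj, inv_mul_cancel]
          exact one_mem N
      · show Function.update f i _ i = _
        rw [Function.update_self]
    have key : n = (f i * ((f i)⁻¹ * n * f i)) * (f i)⁻¹ := by group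
    rw [key]
    exact dif_mem N f hx hy
  | @comm u v hu hv hdisj ihu ihv =>
    set mx := max u.ht v.ht with hmx
    haveI hMnormal : (aDer N mx).Normal := aDer_normal N mx
    have hMu : aDer N mx ≤ Rw N f u := le_trans (aDer_antitone N (le_max_left _ _)) ihu
    have hMv : aDer N mx ≤ Rw N f v := le_trans (aDer_antitone N (le_max_right _ _)) ihv
    have hMN : aDer N mx ≤ N := aDer_le_base N mx
    -- Step 1
    have S1 : ∀ P ∈ Pat N f u, ∀ σ ∈ Dif N f v, ⁅P, σ⁆ ∈ Rw N f (u.comm v) := by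
      rintro P hP σ ⟨Q, hQ, Q', hQ', rfl⟩
      have hσN : Q' * Q⁻¹ ∈ N := dif_subset_N N f ⟨Q, hQ, Q', hQ', rfl⟩
      have key : ⁅P, Q' * Q⁻¹⁆ =
          ⁅P, Q'⁆ * (⁅(Q' * Q⁻¹) * P * (Q' * Q⁻¹)⁻¹, (Q' * Q⁻¹) * Q * (Q' * Q⁻¹)⁻¹⁆)⁻¹ := by
        simp only [commutatorElement_def]
        group
      rw [key]
      exact dif_mem N f
        (pat_comm N f hdisj (pat_conj N f hσN hP) (pat_conj N f hσN hQ))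
        (pat_comm N f hdisj hP hQ')
    -- Step 2
    have S2 : ∀ s ∈ Rw N f v, ∀ t ∈ N, ∀ P ∈ Pat N f u,
        ⁅P, t * s * t⁻¹⁆ ∈ Rw N f (u.comm v) := by
      intro s hs
      induction hs using Subgroup.closure_induction with
      | mem σ hσ =>
        intro t ht P hP
        exact S1 P hP _ (dif_conj N f ht hσ)
      | one =>
        intro t ht P hP
        simpa using (Rw N f (u.comm v)).one_mem
      | mul x y hx hy ihx ihy =>
        intro t ht P hP
        have hxN : x ∈ N := rw_le_N N f hx
        have haN : t * x * t⁻¹ ∈ N := mul_mem (mul_mem ht hxN) (inv_mem ht)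
        have key : ⁅P, t * (x * y) * t⁻¹⁆ =
            ⁅P, t * x * t⁻¹⁆ *
              ⁅(t * x * t⁻¹) * P * (t * x * t⁻¹)⁻¹, (t * x) * y * (t * x)⁻¹⁆ := by
          simp only [commutatorElement_def]
          group
        rw [key]
        exact mul_mem (ihx t ht P hP)
          (ihy (t * x) (mul_mem ht hxN) _ (pat_conj N f haN hP))
      | inv x hx ihx =>
        intro t ht P hP
        have hxN : x ∈ N := rw_le_N N f hx
        have hbN : t * x * t⁻¹ ∈ N := mul_mem (mul_mem ht hxN) (inv_mem ht)
        have key : ⁅P, t * x⁻¹ * t⁻¹⁆ =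
            (⁅(t * x * t⁻¹)⁻¹ * P * (t * x * t⁻¹), t * x * t⁻¹⁆)⁻¹ := by
          simp only [commutatorElement_def]
          group
        rw [key]
        refine inv_mem ?_
        have hP' : (t * x * t⁻¹)⁻¹ * P * ((t * x * t⁻¹)⁻¹)⁻¹ ∈ Pat N f u :=
          pat_conj N f (inv_mem hbN) hP
        simpa [mul_assoc] using ihx t ht _ hP'
    -- Step 3
    have S3 : ∀ P ∈ Pat N f u, ∀ y ∈ aDer N mx, ⁅P, y⁆ ∈ Rw N f (u.comm v) := by
      intro P hP y hy
      have := S2 y (hMv hy) 1 (one_mem N) P hP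
      simpa using this
    -- Step 4
    have S4 : ∀ σ ∈ Dif N f u, ∀ y ∈ aDer N mx, ⁅σ, y⁆ ∈ Rw N f (u.comm v) := by
      rintro σ ⟨P, hP, P', hP', rfl⟩ y hy
      have hσN : P' * P⁻¹ ∈ N := dif_subset_N N f ⟨P, hP, P', hP', rfl⟩
      have key : ⁅P' * P⁻¹, y⁆ =
          (⁅(P' * P⁻¹) * P * (P' * P⁻¹)⁻¹, (P' * P⁻¹) * y * (P' * P⁻¹)⁻¹⁆)⁻¹ * ⁅P', y⁆ := by
        simp only [commutatorElement_def]
        group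
      rw [key]
      exact mul_mem
        (inv_mem (S3 _ (pat_conj N f hσN hP) _ (hMnormal.conj_mem y hy _)))
        (S3 P' hP' y hy)
    -- Step 5
    have S5 : ∀ s ∈ Rw N f u, ∀ t ∈ N, ∀ y ∈ aDer N mx,
        ⁅t * s * t⁻¹, y⁆ ∈ Rw N f (u.comm v) := by
      intro s hs
      induction hs using Subgroup.closure_induction with
      | mem σ hσ =>
        intro t ht y hy
        exact S4 _ (dif_conj N f ht hσ) y hy
      | one =>
        intro t ht y hy
        simpa using (Rw N f (u.comm v)).one_mem
      | mul x z hx hz ihx ihz =>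
        intro t ht y hy
        have hxN : x ∈ N := rw_le_N N f hx
        have haN : t * x * t⁻¹ ∈ N := mul_mem (mul_mem ht hxN) (inv_mem ht)
        have key : ⁅t * (x * z) * t⁻¹, y⁆ =
            ⁅(t * x) * z * (t * x)⁻¹, (t * x * t⁻¹) * y * (t * x * t⁻¹)⁻¹⁆ *
              ⁅t * x * t⁻¹, y⁆ := by
          simp only [commutatorElement_def]
          group
        rw [key]
        exact mul_mem
          (ihz (t * x) (mul_mem ht hxN) _ (hMnormal.conj_mem y hy _))
          (ihx t ht y hy)
      | inv x hx ihx =>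
        intro t ht y hy
        have hxN : x ∈ N := rw_le_N N f hx
        have haN : t * x⁻¹ * t⁻¹ ∈ N := mul_mem (mul_mem ht (inv_mem hxN)) (inv_mem ht)
        have key : ⁅t * x⁻¹ * t⁻¹, y⁆ =
            (⁅t * x * t⁻¹, (t * x⁻¹ * t⁻¹) * y * (t * x⁻¹ * t⁻¹)⁻¹⁆)⁻¹ := by
          simp only [commutatorElement_def]
          group
        rw [key]
        exact inv_mem (ihx t ht _ (hMnormal.conj_mem y hy _))
    -- conclusion
    show aDer N (mx + 1) ≤ Rw N f (u.comm v)
    have : aDer N (mx + 1) = ⁅aDer N mx, aDer N mx⁆ := rfl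
    rw [this, Subgroup.commutator_le]
    intro p hp q hq
    have := S5 p (hMu hp) 1 (one_mem N) q hq
    simpa using this

/-- The key group-theoretic lemma: if all values of a multilinear commutator word `w`
at assignments congruent to `f` modulo a normal subgroup `N` lie in a soluble
subgroup `D`, then `N` is soluble. -/
theorem isSolvable_of_pattern_trap {D : Subgroup G} (hD : IsSolvable D) {w : GpWord}
    (hw : IsMlc w)
    (trap : ∀ f' : ℕ → G, (∀ i, (f i)⁻¹ * f' i ∈ N) → eval f' w ∈ D) :
    IsSolvable N := by
  have hpat : Pat N f w ⊆ (D : Set G) := by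
    rintro x ⟨f', hf', rfl⟩
    exact trap f' hf'
  have hdif : Dif N f w ⊆ (D : Set G) := by
    rintro d ⟨x, hx, y, hy, rfl⟩
    exact mul_mem (hpat hy) (inv_mem (hpat hx))
  have hRD : Rw N f w ≤ D := (Subgroup.closure_le D).mpr hdif
  exact isSolvable_of_aDer_le hD ((aDer_ht_le_Rw N f hw).trans hRD)

end Main

end GpWord

section Topology

variable {G : Type*} [Group G] [TopologicalSpace G] [IsTopologicalGroup G]

theorem commutator_topologicalClosure_le (A B : Subgroup G) :
    ⁅A.topologicalClosure, B.topologicalClosure⁆ ≤ ⁅A, B⁆.topologicalClosure := by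
  rw [Subgroup.commutator_le]
  intro x hx y hy
  have hx' : x ∈ closure (A : Set G) := hx
  have hy' : y ∈ closure (B : Set G) := hy
  have hφ : Continuous fun p : G × G => ⁅p.1, p.2⁆ := by
    simp only [commutatorElement_def]
    fun_prop
  have hmem : (x, y) ∈ closure ((A : Set G) ×ˢ (B : Set G)) := by
    rw [closure_prod_eq]
    exact ⟨hx', hy'⟩
  have himg : ⁅x, y⁆ ∈
      closure ((fun p : G × G => ⁅p.1, p.2⁆) '' ((A : Set G) ×ˢ (B : Set G))) :=
    image_closure_subset_closure_image hφ ⟨(x, y), hmem, rfl⟩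
  have hsub : (fun p : G × G => ⁅p.1, p.2⁆) '' ((A : Set G) ×ˢ (B : Set G)) ⊆
      (⁅A, B⁆ : Subgroup G) := by
    rintro _ ⟨⟨p, q⟩, ⟨hp, hq⟩, rfl⟩
    exact Subgroup.commutator_mem_commutator hp hq
  exact closure_mono hsub himg

theorem isSolvable_topologicalClosure [T2Space G] (H : Subgroup G) (h : IsSolvable H) :
    IsSolvable H.topologicalClosure := by
  have key : ∀ n, aDer H.topologicalClosure n ≤ (aDer H n).topologicalClosure := by
    intro n
    induction n with
    | zero => exact le_rfl
    | succ n ih =>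
      exact le_trans (Subgroup.commutator_mono ih ih) (commutator_topologicalClosure_le _ _)
  obtain ⟨d, hd⟩ := h.solvable
  have h1 : aDer (H : Subgroup G) d = ⊥ := by
    rw [← map_subtype_derivedSeries, hd, Subgroup.map_bot]
  have hbot : (⊥ : Subgroup G).topologicalClosure = ⊥ := by
    refine le_antisymm ?_ (Subgroup.le_topologicalClosure _)
    intro x hx
    have h2 : x ∈ closure ((⊥ : Subgroup G) : Set G) := hx
    rw [Subgroup.coe_bot, closure_singleton] at h2
    simpa using h2
  have h3 : aDer H.topologicalClosure d ≤ ⊥ := by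
    rw [← hbot, ← h1]
    exact key d
  exact isSolvable_of_aDer_le (inferInstance : Group.IsSolvable (⊥ : Subgroup G)) h3

theorem continuous_gpword_eval (w : GpWord) :
    Continuous fun f : ℕ → G => GpWord.eval f w := by
  induction w with
  | var i => exact continuous_apply i
  | comm u v ihu ihv =>
    show Continuous fun f : ℕ → G => ⁅GpWord.eval f u, GpWord.eval f v⁆
    simp only [commutatorElement_def]
    exact ((ihu.mul ihv).mul ihu.inv).mul ihv.inv

end Topology

/-- Theorem 7: if all `w`-values of a profinite group `G` (for a multilinear
commutator word `w`) are contained in a union of countably many soluble subgroups,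
then the verbal subgroup `w(G)` is soluble-by-finite. -/
theorem wValues_covered_by_countably_many_soluble_imp_solubleByFinite
    {G : Type*} [Group G] [TopologicalSpace G] [IsTopologicalGroup G]
    [CompactSpace G] [T2Space G] [TotallyDisconnectedSpace G]
    (w : GpWord) (hw : w.IsMlc) (Gs : ℕ → Subgroup G)
    (hsol : ∀ i, IsSolvable (Gs i))
    (hcov : wValues w G ⊆ ⋃ i, (Gs i : Set G)) :
    ∃ H : Subgroup ((Subgroup.closure (wValues w G)).topologicalClosure),
      IsSolvable H ∧ H.FiniteIndex := by
  classical
  set S : Set G := wValues w G with hSdef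
  have hSc : IsCompact S := by
    have h : S = Set.range (fun f : ℕ → G => GpWord.eval f w) := rfl
    rw [h]
    exact isCompact_range (continuous_gpword_eval w)
  have h1S : (1 : G) ∈ S := ⟨fun _ => 1, GpWord.eval_one w⟩
  set C : ℕ → Subgroup G := fun i => (Gs i).topologicalClosure with hCdef
  have hCsol : ∀ i, IsSolvable (C i) := fun i => isSolvable_topologicalClosure _ (hsol i)
  have hCcl : ∀ i, IsClosed ((C i : Set G)) := fun i => Subgroup.isClosed_topologicalClosure _
  have hcov' : S ⊆ ⋃ i, (C i : Set G) :=
    hcov.trans (Set.iUnion_mono fun i => subset_closure)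
  haveI : CompactSpace S := isCompact_iff_compactSpace.mp hSc
  haveI : Nonempty S := ⟨⟨1, h1S⟩⟩
  obtain ⟨i0, hi0⟩ := nonempty_interior_of_iUnion_of_closed
      (X := S) (f := fun i => (Subtype.val) ⁻¹' (C i : Set G))
      (fun i => (hCcl i).preimage continuous_subtype_val)
      (by
        rw [← Set.preimage_iUnion]
        exact Set.eq_univ_of_forall fun x => hcov' x.2)
  obtain ⟨x0, hx0⟩ := hi0
  obtain ⟨U, hUopen, hxU, hU⟩ : ∃ U : Set G, IsOpen U ∧ (x0 : G) ∈ U ∧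
      ∀ g ∈ U ∩ S, g ∈ C i0 := by
    have h1 : (Subtype.val ⁻¹' (C i0 : Set G) : Set S) ∈ nhds x0 :=
      mem_interior_iff_mem_nhds.mp hx0
    rw [nhds_induced] at h1
    obtain ⟨U, hU1, hU2⟩ := h1
    obtain ⟨V, hVU, hVopen, hxV⟩ := mem_nhds_iff.mp hU1
    refine ⟨V, hVopen, hxV, fun g hg => ?_⟩
    have : (⟨g, hg.2⟩ : S) ∈ Subtype.val ⁻¹' U := hVU hg.1
    exact hU2 this
  have haS : (x0 : G) ∈ S := x0.2
  have hVopen : IsOpen ((fun g => (x0 : G) * g) ⁻¹' U) :=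
    hUopen.preimage (continuous_mul_left _)
  have h1V : (1 : G) ∈ (fun g => (x0 : G) * g) ⁻¹' U := by simpa using hxU
  obtain ⟨W, hWclopen, h1W, hWV⟩ := compact_exists_isClopen_in_isOpen hVopen h1V
  obtain ⟨NN, hNW⟩ :=
    IsTopologicalGroup.exist_openNormalSubgroup_sub_clopen_nhds_of_one hWclopen h1W
  set Nsub : Subgroup G := NN.toOpenSubgroup.toSubgroup with hNsub
  haveI hNnorm : Nsub.Normal := NN.isNormal'
  have hNopen : IsOpen (Nsub : Set G) := NN.toOpenSubgroup.isOpen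
  obtain ⟨fa, hfa⟩ := haS
  have trap : ∀ f' : ℕ → G, (∀ i, (fa i)⁻¹ * f' i ∈ Nsub) →
      GpWord.eval f' w ∈ C i0 := by
    intro f' hf'
    have hmk : QuotientGroup.mk' Nsub (GpWord.eval f' w) =
        QuotientGroup.mk' Nsub (GpWord.eval fa w) :=
      GpWord.pat_mk_eq Nsub fa ⟨f', hf', rfl⟩
    have hmk' : (QuotientGroup.mk (GpWord.eval f' w) : G ⧸ Nsub) =
        QuotientGroup.mk (GpWord.eval fa w) := hmk
    have heq : (QuotientGroup.mk (x0 : G) : G ⧸ Nsub) =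
        QuotientGroup.mk (GpWord.eval f' w) := by
      rw [← hfa]
      exact hmk'.symm
    have hmem : (x0 : G)⁻¹ * GpWord.eval f' w ∈ Nsub := QuotientGroup.eq.mp heq
    have hvalU : GpWord.eval f' w ∈ U := by
      have h1 : (x0 : G)⁻¹ * GpWord.eval f' w ∈ W := hNW hmem
      have h2 := hWV h1
      simpa using h2
    exact hU _ ⟨hvalU, ⟨f', rfl⟩⟩
  have hNsol : IsSolvable Nsub :=
    GpWord.isSolvable_of_pattern_trap Nsub fa (hCsol i0) hw trap
  set K : Subgroup G := (Subgroup.closure (wValues w G)).topologicalClosure with hK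
  haveI : CompactSpace K :=
    isCompact_iff_compactSpace.mp (Subgroup.isClosed_topologicalClosure _).isCompact
  refine ⟨Nsub.subgroupOf K, ?_, ?_⟩
  · -- solubility, via the injection into `Nsub`
    let φ : (Nsub.subgroupOf K) →* Nsub :=
      { toFun := fun x => ⟨((x : K) : G), x.2⟩
        map_one' := rfl
        map_mul' := fun _ _ => rfl }
    have hinj : Function.Injective φ := by
      intro p q hpq
      have h1 : ((φ p : Nsub) : G) = ((φ q : Nsub) : G) := congrArg Subtype.val hpq
      exact Subtype.ext (Subtype.ext h1)
    haveI : Group.IsSolvable Nsub := hNsol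
    exact solvable_of_solvable_injective hinj
  · have hopen : IsOpen ((Nsub.subgroupOf K : Subgroup K) : Set K) := by
      have h : ((Nsub.subgroupOf K : Subgroup K) : Set K) =
          Subtype.val ⁻¹' (Nsub : Set G) := rfl
      rw [h]
      exact hNopen.preimage continuous_subtype_val
    haveI : Finite (K ⧸ Nsub.subgroupOf K) :=
      Subgroup.quotient_finite_of_isOpen _ hopen
    exact Subgroup.finiteIndex_of_finite_quotient
end

section
/- Let G be a group, k a positive integer, H a normal subgroup of G, and a_1, …, a_{2^k} elements of G such that δ_k(a_1 h_1, …, a_{2^k} h_{2^k}) = 1 for all h_1, …, h_{2^k} ∈ H. Then H is soluble of derived length at most k. -/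
open scoped commutatorElement

/-- Evaluation of the derived word `δ_k` on `2^k` variables: `δ_0 = x_1` and
`δ_k = [δ_{k-1}(x_1,…,x_{2^{k-1}}), δ_{k-1}(x_{2^{k-1}+1},…,x_{2^k})]`.
Here `deltaEval k g` uses the values `g 0, …, g (2^k - 1)`. -/
def deltaEval {G : Type*} [Group G] : ℕ → (ℕ → G) → G
  | 0, g => g 0
  | k + 1, g => ⁅deltaEval k g, deltaEval k (fun i => g (i + 2 ^ k))⁆

namespace DerivedCoset

variable {G : Type*} [Group G]

/-- Old-convention commutator `a⁻¹b⁻¹ab`. -/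
def dcomm (a b : G) : G := a⁻¹ * b⁻¹ * a * b

/-- The derived word in the old convention. -/
def ddelta : ℕ → (ℕ → G) → G
  | 0, g => g 0
  | k + 1, g => dcomm (ddelta k g) (ddelta k (fun i => g (i + 2 ^ k)))

lemma ddelta_zero (g : ℕ → G) : ddelta 0 g = g 0 := rfl

lemma ddelta_succ (k : ℕ) (g : ℕ → G) :
    ddelta (k + 1) g = dcomm (ddelta k g) (ddelta k (fun i => g (i + 2 ^ k))) := rfl

lemma ddelta_congr : ∀ (k : ℕ) (g g' : ℕ → G),
    (∀ i < 2 ^ k, g i = g' i) → ddelta k g = ddelta k g'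
  | 0, g, g', h => h 0 (by positivity)
  | k + 1, g, g', h => by
    have h2 : 2 ^ (k + 1) = 2 ^ k + 2 ^ k := by rw [pow_succ]; ring
    rw [ddelta_succ, ddelta_succ,
      ddelta_congr k g g' (fun i hi => h i (by omega)),
      ddelta_congr k (fun i => g (i + 2 ^ k)) (fun i => g' (i + 2 ^ k))
        (fun i hi => h _ (by omega))]

lemma ddelta_hom {G' : Type*} [Group G'] (f : G →* G') :
    ∀ (k : ℕ) (g : ℕ → G), f (ddelta k g) = ddelta k (fun i => f (g i))
  | 0, g => rfl
  | k + 1, g => by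
    rw [ddelta_succ, ddelta_succ, ← ddelta_hom f k g, ← ddelta_hom f k (fun i => g (i + 2 ^ k))]
    simp [dcomm]

lemma ddelta_conj (a : G) : ∀ (k : ℕ) (g : ℕ → G),
    a * ddelta k g * a⁻¹ = ddelta k (fun i => a * g i * a⁻¹)
  | 0, g => rfl
  | k + 1, g => by
    rw [ddelta_succ, ddelta_succ, ← ddelta_conj a k g, ← ddelta_conj a k (fun i => g (i + 2 ^ k))]
    simp only [dcomm]
    group

/- group identities -/
lemma gid1 (cc ee V : G) :
    dcomm ee V = ee⁻¹ * ((dcomm cc V)⁻¹ * (ee * dcomm (cc * ee) V * ee⁻¹)) * ee := by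
  simp only [dcomm]; group

lemma gid2 (ee dd th : G) :
    dcomm ee th = dcomm ee (dd * th) * (th⁻¹ * (dcomm ee dd)⁻¹ * th) := by
  simp only [dcomm]; group

lemma gid_mul_left (z w q : G) : dcomm (z * w) q = (w⁻¹ * dcomm z q * w) * dcomm w q := by
  simp only [dcomm]; group

lemma gid_inv_left (z q : G) : dcomm z⁻¹ q = z * (dcomm z q)⁻¹ * z⁻¹ := by
  simp only [dcomm]; group

lemma gid_mul_right (p z w : G) : dcomm p (z * w) = dcomm p w * (w⁻¹ * dcomm p z * w) := by
  simp only [dcomm]; group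

lemma gid_inv_right (p z : G) : dcomm p z⁻¹ = z * (dcomm p z)⁻¹ * z⁻¹ := by
  simp only [dcomm]; group

lemma gid_conj_left (h z q : G) : dcomm (h⁻¹ * z * h) q = h⁻¹ * dcomm z (h * q * h⁻¹) * h := by
  simp only [dcomm]; group

lemma gid_conj_right (h z p : G) : dcomm p (h⁻¹ * z * h) = h⁻¹ * dcomm (h * p * h⁻¹) z * h := by
  simp only [dcomm]; group

lemma gid_one_left (q : G) : dcomm 1 q = 1 := by simp only [dcomm]; group

/-- value of the coset word -/
def uval (k : ℕ) (b x : ℕ → G) : G := ddelta k (fun i => x i * b i)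

def oneT : ℕ → G := fun _ => (1 : G)

/-- based H-part of a value -/
def eb (k : ℕ) (b x : ℕ → G) : G := (uval k b oneT)⁻¹ * uval k b x

section WithH

variable (H : Subgroup G)

lemma oneT_mem : ∀ i : ℕ, (oneT i : G) ∈ H := fun _ => H.one_mem

lemma diffH (hH : H.Normal) (k : ℕ) (b x x' : ℕ → G) (hx : ∀ i, x i ∈ H) (hx' : ∀ i, x' i ∈ H) :
    (uval k b x)⁻¹ * uval k b x' ∈ H := by
  haveI := hH
  have key : ∀ z : ℕ → G, (∀ i, z i ∈ H) →
      (QuotientGroup.mk' H) (uval k b z) = ddelta k (fun i => (QuotientGroup.mk' H) (b i)) := by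
    intro z hz
    rw [uval, ddelta_hom]
    refine ddelta_congr _ _ _ (fun i _ => ?_)
    rw [map_mul, QuotientGroup.mk'_apply, (QuotientGroup.eq_one_iff _).mpr (hz i), one_mul]
  have hker : (uval k b x)⁻¹ * uval k b x' ∈ (QuotientGroup.mk' H).ker := by
    rw [MonoidHom.mem_ker, map_mul, map_inv, key x hx, key x' hx']
    group
  rwa [QuotientGroup.ker_mk'] at hker

lemma ebH (hH : H.Normal) (k : ℕ) (b x : ℕ → G) (hx : ∀ i, x i ∈ H) : eb k b x ∈ H :=
  diffH H hH k b oneT x (oneT_mem H) hx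

lemma cval (hH : H.Normal) (k : ℕ) (b : ℕ → G) (h : G) (hh : h ∈ H) (x : ℕ → G) (hx : ∀ i, x i ∈ H) :
    ∃ x' : ℕ → G, (∀ i, x' i ∈ H) ∧ h * uval k b x * h⁻¹ = uval k b x' := by
  refine ⟨fun i => h * x i * (b i * h⁻¹ * (b i)⁻¹), fun i => ?_, ?_⟩
  · exact H.mul_mem (H.mul_mem hh (hx i)) (hH.conj_mem _ (H.inv_mem hh) (b i))
  · rw [uval, uval, ddelta_conj]
    refine ddelta_congr _ _ _ (fun i _ => by group)

/-- joining two half-tuples -/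
def jn (k : ℕ) (x y : ℕ → G) : ℕ → G := fun i => if i < 2 ^ k then x i else y (i - 2 ^ k)

lemma jnH (k : ℕ) (x y : ℕ → G) (hx : ∀ i, x i ∈ H) (hy : ∀ i, y i ∈ H) :
    ∀ i, jn k x y i ∈ H := by
  intro i
  unfold jn
  split <;> [exact hx i; exact hy _]

lemma wsplit (k : ℕ) (b x y : ℕ → G) :
    uval (k + 1) b (jn k x y) = dcomm (uval k b x) (uval k (fun i => b (i + 2 ^ k)) y) := by
  rw [uval, ddelta_succ]
  congr 1
  · refine ddelta_congr _ _ _ (fun i hi => ?_)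
    rw [show jn k x y i = x i from if_pos hi]
  · refine ddelta_congr _ _ _ (fun i _ => ?_)
    have : jn k x y (i + 2 ^ k) = y i := by
      unfold jn
      rw [if_neg (by omega), Nat.add_sub_cancel]
    rw [this]

lemma bridge : ∀ (k : ℕ) (g : ℕ → G),
    deltaEval k g = (ddelta k (fun i => (g (2 ^ k - 1 - i))⁻¹))⁻¹
  | 0, g => by simp [deltaEval, ddelta]
  | k + 1, g => by
    have h2 : 2 ^ (k + 1) = 2 ^ k + 2 ^ k := by rw [pow_succ]; ring
    have hA : 0 < 2 ^ k := Nat.pow_pos (by norm_num)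
    have hL : deltaEval k g = (ddelta k (fun i => (g (2 ^ k - 1 - i))⁻¹))⁻¹ := bridge k g
    have hR : deltaEval k (fun i => g (i + 2 ^ k)) =
        (ddelta k (fun i => (g (2 ^ k - 1 - i + 2 ^ k))⁻¹))⁻¹ := by
      have := bridge k (fun i => g (i + 2 ^ k))
      simpa using this
    have e1 : ddelta (k + 1) (fun i => (g (2 ^ (k + 1) - 1 - i))⁻¹) =
        dcomm (ddelta k (fun i => (g (2 ^ k - 1 - i + 2 ^ k))⁻¹))
          (ddelta k (fun i => (g (2 ^ k - 1 - i))⁻¹)) := by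
      rw [ddelta_succ]
      congr 1
      · refine ddelta_congr _ _ _ (fun i hi => ?_)
        have : 2 ^ (k + 1) - 1 - i = 2 ^ k - 1 - i + 2 ^ k := by omega
        rw [this]
      · refine ddelta_congr _ _ _ (fun i hi => ?_)
        have : 2 ^ (k + 1) - 1 - (i + 2 ^ k) = 2 ^ k - 1 - i := by omega
        rw [this]
    show ⁅deltaEval k g, deltaEval k (fun i => g (i + 2 ^ k))⁆ = _
    rw [hL, hR, e1, commutatorElement_def, dcomm]
    group

lemma gid_one_right (p : G) : dcomm p 1 = 1 := by simp only [dcomm]; group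

lemma memD (hH : H.Normal) :
    ∀ (k : ℕ) (b : ℕ → G) (C : Subgroup G),
      (∀ h ∈ H, ∀ g ∈ C, h⁻¹ * g * h ∈ C) →
      (∀ x x' : ℕ → G, (∀ i, x i ∈ H) → (∀ i, x' i ∈ H) →
        (uval k b x)⁻¹ * uval k b x' ∈ C) →
      ∀ p : H, p ∈ derivedSeries H k → (p : G) ∈ C := by
  intro k
  induction k with
  | zero =>
    intro b C hC hyp p _
    have hcm : ∀ i : ℕ, b 0 * (p : G) * (b 0)⁻¹ ∈ H := fun _ => hH.conj_mem _ p.2 (b 0)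
    have h1 := hyp oneT (fun _ => b 0 * (p : G) * (b 0)⁻¹) (oneT_mem H) hcm
    have h2 : (uval 0 b oneT)⁻¹ * uval 0 b (fun _ => b 0 * (p : G) * (b 0)⁻¹) = (p : G) := by
      simp only [uval, ddelta_zero, oneT]
      group
    rwa [h2] at h1
  | succ k ih =>
    intro b C hC hyp
    -- step 1 : commutators of based parts with right values are in C
    have s1 : ∀ x y : ℕ → G, (∀ i, x i ∈ H) → (∀ i, y i ∈ H) →
        dcomm (eb k b x) (uval k (fun i => b (i + 2 ^ k)) y) ∈ C := by
      intro x y hx hy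
      obtain ⟨z', hz', hcj⟩ := cval H hH (k + 1) b (eb k b x) (ebH H hH k b x hx)
        (jn k x y) (jnH H k x y hx hy)
      have key := gid1 (uval k b oneT) (eb k b x) (uval k (fun i => b (i + 2 ^ k)) y)
      have hce : uval k b oneT * eb k b x = uval k b x := by rw [eb]; group
      rw [hce, ← wsplit k b x y, ← wsplit k b oneT y, hcj] at key
      rw [key]
      exact hC (eb k b x) (ebH H hH k b x hx) _
        (hyp _ _ (jnH H k oneT y (oneT_mem H) hy) hz')
    have s2 : ∀ x y : ℕ → G, (∀ i, x i ∈ H) → (∀ i, y i ∈ H) →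
        dcomm (eb k b x) (eb k (fun i => b (i + 2 ^ k)) y) ∈ C := by
      intro x y hx hy
      have key := gid2 (eb k b x) (uval k (fun i => b (i + 2 ^ k)) oneT)
        (eb k (fun i => b (i + 2 ^ k)) y)
      have hdv : uval k (fun i => b (i + 2 ^ k)) oneT * eb k (fun i => b (i + 2 ^ k)) y =
          uval k (fun i => b (i + 2 ^ k)) y := by rw [eb]; group
      rw [hdv] at key
      rw [key]
      refine C.mul_mem (s1 x y hx hy) ?_
      exact hC _ (ebH H hH k (fun i => b (i + 2 ^ k)) y hy) _
        (C.inv_mem (s1 x oneT hx (oneT_mem H)))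
    -- the first auxiliary subgroup
    let K1 : Subgroup G :=
      { carrier := {z | z ∈ H ∧
          (∀ y : ℕ → G, (∀ i, y i ∈ H) → dcomm z (eb k (fun i => b (i + 2 ^ k)) y) ∈ C) ∧
          dcomm z (uval k (fun i => b (i + 2 ^ k)) oneT) ∈ C}
        one_mem' := ⟨H.one_mem, fun y _ => by rw [gid_one_left]; exact C.one_mem,
          by rw [gid_one_left]; exact C.one_mem⟩
        mul_mem' := by
          intro z w hz hw
          obtain ⟨hzH, hzt, hzd⟩ := hz
          obtain ⟨hwH, hwt, hwd⟩ := hw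
          refine ⟨H.mul_mem hzH hwH, fun y hy => ?_, ?_⟩
          · rw [gid_mul_left]
            exact C.mul_mem (hC w hwH _ (hzt y hy)) (hwt y hy)
          · rw [gid_mul_left]
            exact C.mul_mem (hC w hwH _ hzd) hwd
        inv_mem' := by
          intro z hz
          obtain ⟨hzH, hzt, hzd⟩ := hz
          refine ⟨H.inv_mem hzH, fun y hy => ?_, ?_⟩
          · rw [gid_inv_left]
            have := hC z⁻¹ (H.inv_mem hzH) _ (C.inv_mem (hzt y hy))
            simpa using this
          · rw [gid_inv_left]
            have := hC z⁻¹ (H.inv_mem hzH) _ (C.inv_mem hzd)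
            simpa using this }
    have memK1 : ∀ z : G, z ∈ K1 ↔ (z ∈ H ∧
          (∀ y : ℕ → G, (∀ i, y i ∈ H) → dcomm z (eb k (fun i => b (i + 2 ^ k)) y) ∈ C) ∧
          dcomm z (uval k (fun i => b (i + 2 ^ k)) oneT) ∈ C) := fun z => Iff.rfl
    have memK1_e : ∀ x : ℕ → G, (∀ i, x i ∈ H) → eb k b x ∈ K1 := by
      intro x hx
      exact (memK1 _).mpr ⟨ebH H hH k b x hx, fun y hy => s2 x y hx hy,
        s1 x oneT hx (oneT_mem H)⟩
    have hC1 : ∀ h ∈ H, ∀ g ∈ K1, h⁻¹ * g * h ∈ K1 := by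
      intro h hh z hz
      obtain ⟨hzH, hzt, hzd⟩ := (memK1 z).mp hz
      refine (memK1 _).mpr ⟨by simpa using hH.conj_mem z hzH h⁻¹, fun y hy => ?_, ?_⟩
      · rw [gid_conj_left]
        obtain ⟨y1, hy1, hcj1⟩ := cval H hH k (fun i => b (i + 2 ^ k)) h hh y hy
        obtain ⟨y0, hy0, hcj0⟩ := cval H hH k (fun i => b (i + 2 ^ k)) h hh oneT (oneT_mem H)
        have htt : h * eb k (fun i => b (i + 2 ^ k)) y * h⁻¹ =
            (eb k (fun i => b (i + 2 ^ k)) y0)⁻¹ * eb k (fun i => b (i + 2 ^ k)) y1 := by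
          simp only [eb]
          rw [← hcj0, ← hcj1]
          group
        rw [htt, gid_mul_right, gid_inv_right]
        refine hC h hh _ (C.mul_mem (hzt y1 hy1)
          (hC _ (ebH H hH k (fun i => b (i + 2 ^ k)) y1 hy1) _ ?_))
        have := hC (eb k (fun i => b (i + 2 ^ k)) y0)⁻¹
          (H.inv_mem (ebH H hH k (fun i => b (i + 2 ^ k)) y0 hy0)) _ (C.inv_mem (hzt y0 hy0))
        simpa using this
      · rw [gid_conj_left]
        obtain ⟨y0, hy0, hcj0⟩ := cval H hH k (fun i => b (i + 2 ^ k)) h hh oneT (oneT_mem H)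
        have hdd : h * uval k (fun i => b (i + 2 ^ k)) oneT * h⁻¹ =
            uval k (fun i => b (i + 2 ^ k)) oneT * eb k (fun i => b (i + 2 ^ k)) y0 := by
          rw [hcj0, eb]
          group
        rw [hdd, gid_mul_right]
        exact hC h hh _ (C.mul_mem (hzt y0 hy0)
          (hC _ (ebH H hH k (fun i => b (i + 2 ^ k)) y0 hy0) _ hzd))
    have hyp1 : ∀ x x' : ℕ → G, (∀ i, x i ∈ H) → (∀ i, x' i ∈ H) →
        (uval k b x)⁻¹ * uval k b x' ∈ K1 := by
      intro x x' hx hx'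
      have he : (uval k b x)⁻¹ * uval k b x' = (eb k b x)⁻¹ * eb k b x' := by
        simp only [eb]; group
      rw [he]
      exact K1.mul_mem (K1.inv_mem (memK1_e x hx)) (memK1_e x' hx')
    have R1 := ih b K1 hC1 hyp1
    -- the second auxiliary subgroup
    let K2 : Subgroup G :=
      { carrier := {z | z ∈ H ∧
          ∀ p : H, p ∈ derivedSeries H k → dcomm (p : G) z ∈ C}
        one_mem' := ⟨H.one_mem, fun p _ => by rw [gid_one_right]; exact C.one_mem⟩
        mul_mem' := by
          intro z w hz hw
          obtain ⟨hzH, hzc⟩ := hz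
          obtain ⟨hwH, hwc⟩ := hw
          refine ⟨H.mul_mem hzH hwH, fun p hp => ?_⟩
          rw [gid_mul_right]
          exact C.mul_mem (hwc p hp) (hC w hwH _ (hzc p hp))
        inv_mem' := by
          intro z hz
          obtain ⟨hzH, hzc⟩ := hz
          refine ⟨H.inv_mem hzH, fun p hp => ?_⟩
          rw [gid_inv_right]
          have := hC z⁻¹ (H.inv_mem hzH) _ (C.inv_mem (hzc p hp))
          simpa using this }
    have memK2 : ∀ z : G, z ∈ K2 ↔ (z ∈ H ∧
        ∀ p : H, p ∈ derivedSeries H k → dcomm (p : G) z ∈ C) := fun z => Iff.rfl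
    have hC2 : ∀ h ∈ H, ∀ g ∈ K2, h⁻¹ * g * h ∈ K2 := by
      intro h hh z hz
      obtain ⟨hzH, hzc⟩ := (memK2 z).mp hz
      refine (memK2 _).mpr ⟨by simpa using hH.conj_mem z hzH h⁻¹, fun p hp => ?_⟩
      rw [gid_conj_right]
      have hp' : (⟨h, hh⟩ * p * ⟨h, hh⟩⁻¹ : H) ∈ derivedSeries H k :=
        (derivedSeries_normal _ _).conj_mem p hp ⟨h, hh⟩
      have hcoe : ((⟨h, hh⟩ * p * ⟨h, hh⟩⁻¹ : H) : G) = h * (p : G) * h⁻¹ := by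
        simp
      have := hzc _ hp'
      rw [hcoe] at this
      exact hC h hh _ this
    have memK2_t : ∀ y : ℕ → G, (∀ i, y i ∈ H) → eb k (fun i => b (i + 2 ^ k)) y ∈ K2 := by
      intro y hy
      exact (memK2 _).mpr ⟨ebH H hH k (fun i => b (i + 2 ^ k)) y hy,
        fun p hp => ((memK1 _).mp (R1 p hp)).2.1 y hy⟩
    have hyp2 : ∀ x x' : ℕ → G, (∀ i, x i ∈ H) → (∀ i, x' i ∈ H) →
        (uval k (fun i => b (i + 2 ^ k)) x)⁻¹ * uval k (fun i => b (i + 2 ^ k)) x' ∈ K2 := by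
      intro x x' hx hx'
      have he : (uval k (fun i => b (i + 2 ^ k)) x)⁻¹ * uval k (fun i => b (i + 2 ^ k)) x' =
          (eb k (fun i => b (i + 2 ^ k)) x)⁻¹ * eb k (fun i => b (i + 2 ^ k)) x' := by
        simp only [eb]; group
      rw [he]
      exact K2.mul_mem (K2.inv_mem (memK2_t x hx)) (memK2_t x' hx')
    have R2 := ih (fun i => b (i + 2 ^ k)) K2 hC2 hyp2
    -- conclusion
    intro p hp
    have hle : derivedSeries H (k + 1) ≤ C.comap H.subtype := by
      rw [derivedSeries_succ]
      refine Subgroup.commutator_le.mpr ?_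
      intro g1 hg1 g2 hg2
      rw [Subgroup.mem_comap]
      have hco : (H.subtype) ⁅g1, g2⁆ = dcomm ((g1 : G))⁻¹ ((g2 : G))⁻¹ := by
        simp [commutatorElement_def, dcomm]
      rw [hco]
      have h1 : (g1⁻¹ : H) ∈ derivedSeries H k := (derivedSeries H k).inv_mem hg1
      have h2 : (g2⁻¹ : H) ∈ derivedSeries H k := (derivedSeries H k).inv_mem hg2
      have := ((memK2 _).mp (R2 (g2⁻¹) h2)).2 (g1⁻¹) h1
      simpa using this
    exact Subgroup.mem_comap.mp (hle hp)

end WithH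

end DerivedCoset

/-- If `H` is a normal subgroup of `G` and `a_1, …, a_{2^k}` are elements of `G`
such that `δ_k(a_1 h_1, …, a_{2^k} h_{2^k}) = 1` for all `h_i ∈ H`, then `H` is
soluble of derived length at most `k`. -/
theorem soluble_of_delta_coset_identity
    {G : Type*} [Group G] (k : ℕ) (hk : 0 < k) (H : Subgroup G) (hH : H.Normal)
    (a : ℕ → G)
    (hid : ∀ h : ℕ → G, (∀ i, h i ∈ H) → deltaEval k (fun i => a i * h i) = 1) :
    derivedSeries H k = ⊥ := by
  have key : ∀ x : ℕ → G, (∀ i, x i ∈ H) →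
      DerivedCoset.uval k (fun i => (a (2 ^ k - 1 - i))⁻¹) x = 1 := by
    intro x hx
    have h1 := hid (fun j => (x (2 ^ k - 1 - j))⁻¹) (fun j => H.inv_mem (hx _))
    have h2 := DerivedCoset.bridge k (fun i => a i * (fun j => (x (2 ^ k - 1 - j))⁻¹) i)
    rw [h1] at h2
    have h3 : DerivedCoset.ddelta k
        (fun i => ((fun i' => a i' * (fun j => (x (2 ^ k - 1 - j))⁻¹) i') (2 ^ k - 1 - i))⁻¹)
          = 1 := by
      rw [← inv_eq_one]
      exact h2.symm
    refine Eq.trans ?_ h3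
    refine DerivedCoset.ddelta_congr _ _ _ (fun i hi => ?_)
    show x i * (a (2 ^ k - 1 - i))⁻¹ = (a (2 ^ k - 1 - i) * (x (2 ^ k - 1 - (2 ^ k - 1 - i)))⁻¹)⁻¹
    have hσ : 2 ^ k - 1 - (2 ^ k - 1 - i) = i := by omega
    rw [hσ]
    group
  have hC : ∀ h ∈ H, ∀ g ∈ (⊥ : Subgroup G), h⁻¹ * g * h ∈ (⊥ : Subgroup G) := by
    intro h _ g hg
    rw [Subgroup.mem_bot] at hg ⊢
    rw [hg]
    group
  have hyp : ∀ x x' : ℕ → G, (∀ i, x i ∈ H) → (∀ i, x' i ∈ H) →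
      (DerivedCoset.uval k (fun i => (a (2 ^ k - 1 - i))⁻¹) x)⁻¹ *
        DerivedCoset.uval k (fun i => (a (2 ^ k - 1 - i))⁻¹) x' ∈ (⊥ : Subgroup G) := by
    intro x x' hx hx'
    rw [key x hx, key x' hx', Subgroup.mem_bot]
    group
  have R := DerivedCoset.memD H hH k (fun i => (a (2 ^ k - 1 - i))⁻¹) ⊥ hC hyp
  rw [eq_bot_iff]
  intro p hp
  rw [Subgroup.mem_bot]
  have h1 := R p hp
  rw [Subgroup.mem_bot] at h1
  exact OneMemClass.coe_eq_one.mp h1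
end

section
/- Let H be an abelian normal subgroup of a group G and suppose G = ⟨H, a_1, a_2, …, a_s⟩ for elements a_1, …, a_s ∈ G. Then [H,G] = [H,a_1][H,a_2]⋯[H,a_s], the setwise product of the subgroups [H,a_i]. -/
open scoped commutatorElement

theorem aux_noncommProd_univ_eq_ofFn {M : Type*} [Monoid M] {n : ℕ} (f : Fin n → M) (h) :
    Finset.univ.noncommProd f h = (List.ofFn f).prod := by
  rw [List.ofFn_eq_map]
  show Multiset.noncommProd (Finset.univ.val.map f) _ = _
  exact Multiset.noncommProd_coe ((List.finRange n).map f) _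

/-- If `H` is an abelian normal subgroup of `G` and `G = ⟨H, a_1, …, a_s⟩`, then
`[H, G]` is the setwise product of the subgroups `[H, a_i]`, where `[H, a]` denotes
the subgroup generated by all `[h, a]` with `h ∈ H`. -/
theorem commutator_with_group_eq_product_of_commutators_with_generators
    {G : Type*} [Group G] (H : Subgroup G) (hH : H.Normal)
    (hab : ∀ x ∈ H, ∀ y ∈ H, x * y = y * x)
    (s : ℕ) (a : Fin s → G)
    (hgen : Subgroup.closure ((H : Set G) ∪ Set.range a) = ⊤) :
    ∀ g : G, g ∈ ⁅H, (⊤ : Subgroup G)⁆ ↔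
      ∃ f : Fin s → G,
        (∀ i, f i ∈ Subgroup.closure {x : G | ∃ h ∈ H, x = ⁅h, a i⁆}) ∧
        g = (List.ofFn f).prod := by
  set K : Fin s → Subgroup G := fun i => Subgroup.closure {x : G | ∃ h ∈ H, x = ⁅h, a i⁆}
    with hKdef
  -- each `K i` is contained in `H`
  have hKH : ∀ i, K i ≤ H := by
    intro i
    refine (Subgroup.closure_le _).2 ?_
    rintro x ⟨h, hh, rfl⟩
    have e : ⁅h, a i⁆ = h * (a i * h⁻¹ * (a i)⁻¹) := by group
    rw [e]
    exact H.mul_mem hh (hH.conj_mem _ (H.inv_mem hh) _)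
  set N : Subgroup G := ⨆ i, K i with hNdef
  have hNH : N ≤ H := iSup_le hKH
  have hKN : ∀ i, K i ≤ N := fun i => le_iSup K i
  have hgenK : ∀ i, ∀ h ∈ H, ⁅h, a i⁆ ∈ K i := fun i h hh =>
    Subgroup.subset_closure ⟨h, hh, rfl⟩
  -- conjugation (in both directions) preserves N
  have hconj : ∀ g : G, ∀ n ∈ N, g * n * g⁻¹ ∈ N ∧ g⁻¹ * n * g ∈ N := by
    intro g
    have hg : g ∈ Subgroup.closure ((H : Set G) ∪ Set.range a) := by
      rw [hgen]; trivial
    induction hg using Subgroup.closure_induction with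
    | mem x hx =>
      intro n hn
      rcases hx with hx | ⟨i, rfl⟩
      · -- x ∈ H : conjugation fixes n since H is abelian
        have hc : x * n = n * x := hab x hx n (hNH hn)
        constructor
        · have : x * n * x⁻¹ = n := by rw [hc]; group
          rw [this]; exact hn
        · have : x⁻¹ * n * x = n := by
            have : n * x = x * n := hc.symm
            rw [mul_assoc, this]; group
          rw [this]; exact hn
      · -- x = a i
        constructor
        · have e : a i * n * (a i)⁻¹ = ⁅n, a i⁆⁻¹ * n := by group
          rw [e]
          exact N.mul_mem (N.inv_mem (hKN i (hgenK i n (hNH hn)))) hn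
        · set m := (a i)⁻¹ * n * a i with hm
          have hmH : m ∈ H := by
            have := hH.conj_mem n (hNH hn) (a i)⁻¹
            simpa [hm] using this
          have e : m = ⁅m, a i⁆ * n := by
            have : n = a i * m * (a i)⁻¹ := by rw [hm]; group
            rw [this]; group
          show m ∈ N
          rw [e]
          exact N.mul_mem (hKN i (hgenK i m hmH)) hn
    | one =>
      intro n hn
      constructor <;> simpa using hn
    | mul x y _ _ px py =>
      intro n hn
      constructor
      · have e : x * y * n * (x * y)⁻¹ = x * (y * n * y⁻¹) * x⁻¹ := by group
        rw [e]; exact (px _ (py n hn).1).1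
      · have e : (x * y)⁻¹ * n * (x * y) = y⁻¹ * (x⁻¹ * n * x) * y := by group
        rw [e]; exact (py _ (px n hn).2).2
    | inv x _ px =>
      intro n hn
      constructor
      · have e : x⁻¹ * n * (x⁻¹)⁻¹ = x⁻¹ * n * x := by group
        rw [e]; exact (px n hn).2
      · have e : (x⁻¹)⁻¹ * n * x⁻¹ = x * n * x⁻¹ := by group
        rw [e]; exact (px n hn).1
  -- every commutator [h, g] lies in N
  have hcommN : ∀ g : G, ∀ h ∈ H, ⁅h, g⁆ ∈ N := by
    intro g
    have hg : g ∈ Subgroup.closure ((H : Set G) ∪ Set.range a) := by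
      rw [hgen]; trivial
    induction hg using Subgroup.closure_induction with
    | mem x hx =>
      intro h hh
      rcases hx with hx | ⟨i, rfl⟩
      · have : ⁅h, x⁆ = 1 := by
          rw [commutatorElement_def]
          have hc : h * x = x * h := hab h hh x hx
          rw [hc]; group
        rw [this]; exact N.one_mem
      · exact hKN i (hgenK i h hh)
    | one =>
      intro h hh
      simpa using N.one_mem
    | mul x y _ _ px py =>
      intro h hh
      have e : ⁅h, x * y⁆ = ⁅h, x⁆ * (x * ⁅h, y⁆ * x⁻¹) := by group
      rw [e]
      exact N.mul_mem (px h hh) (hconj x _ (py h hh)).1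
    | inv x _ px =>
      intro h hh
      have e : ⁅h, x⁻¹⁆ = x⁻¹ * ⁅h, x⁆⁻¹ * x := by group
      rw [e]
      exact (hconj x _ (N.inv_mem (px h hh))).2
  have hle : ⁅H, (⊤ : Subgroup G)⁆ ≤ N :=
    Subgroup.commutator_le.2 fun h hh g _ => hcommN g h hh
  have hge : N ≤ ⁅H, (⊤ : Subgroup G)⁆ := by
    refine iSup_le fun i => (Subgroup.closure_le _).2 ?_
    rintro x ⟨h, hh, rfl⟩
    exact Subgroup.commutator_mem_commutator hh (Subgroup.mem_top _)
  have hNeq : ⁅H, (⊤ : Subgroup G)⁆ = N := le_antisymm hle hge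
  -- elements of different K i commute
  have hcomm : Pairwise fun i j : Fin s => ∀ x y : G, x ∈ K i → y ∈ K j → Commute x y := by
    intro i j _
    intro x y hx hy
    exact hab x (hKH i hx) y (hKH j hy)
  intro g
  rw [hNeq]
  constructor
  · intro hg
    have : g ∈ (Subgroup.noncommPiCoprod hcomm).range := by
      rw [Subgroup.noncommPiCoprod_range]; exact hg
    obtain ⟨x, hx⟩ := this
    refine ⟨fun i => (x i : G), fun i => (x i).2, ?_⟩
    rw [← hx]
    exact (aux_noncommProd_univ_eq_ofFn (fun i => ((x i : G)))
      (fun p _ q _ hpq => hcomm hpq _ _ (x p).2 (x q).2))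
  · rintro ⟨f, hf, rfl⟩
    have : Subgroup.noncommPiCoprod hcomm (fun i => (⟨f i, hf i⟩ : K i)) = (List.ofFn f).prod :=
      aux_noncommProd_univ_eq_ofFn f (fun p _ q _ hpq => hcomm hpq _ _ (hf p) (hf q))
    rw [← this]
    have : Subgroup.noncommPiCoprod hcomm (fun i => (⟨f i, hf i⟩ : K i)) ∈
        (Subgroup.noncommPiCoprod hcomm).range := ⟨_, rfl⟩
    rwa [Subgroup.noncommPiCoprod_range] at this
end
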